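/- Fix ν > 0, ρ > 0, and matrices A₁, …, A_m ∈ ℂ^{n×n} such that ‖(1/m)·Σ_{i=1}^m (p* Aᵢ* q)·Aᵢ − 2 q p*‖ < ν for all unit vectors p, q ∈ ℂⁿ. Define g(z) = (1/m)·Σ_{i=1}^m [(z* Aᵢ* z − x* Aᵢ* x)·Aᵢ z + (z* Aᵢ z − x* Aᵢ x)·Aᵢ* z]. Then for all h, x ∈ ℂⁿ with h* x real and ‖h‖₂/‖x‖₂ ≤ ρ, taking z = x + h: Re(⟨h, g(z)⟩) ≥ c₁(ν, ρ)·‖h‖₂²·‖x‖₂², where c₁(ν, ρ) = 4·(1 − ρ − (ν/2)·(2 + 3ρ + ρ²)). -/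

import Mathlib

open MeasureTheory ProbabilityTheory Matrix Complex Finset

noncomputable section

/-- The vector in `ℝ^{2n²}` of real and imaginary parts of the entries of a complex matrix. -/
def coeffVec {n : ℕ} (A : Matrix (Fin n) (Fin n) ℂ) : Fin n × Fin n × Fin 2 → ℝ :=
  fun p => if p.2.2 = (0 : Fin 2) then (A p.1 p.2.1).re else (A p.1 p.2.1).im

/-- A real random variable is sub-Gaussian: its tails are dominated by a Gaussian tail. -/
def IsSubGaussianRV {Ω : Type} [MeasureSpace Ω] (X : Ω → ℝ) : Prop :=
  ∃ K > 0, ∀ t : ℝ, 0 ≤ t →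
    (ℙ {ω | t ≤ |X ω|}).toReal ≤ 2 * Real.exp (-(t ^ 2) / K ^ 2)

/-- The rotation-invariant sub-Gaussian measurement model: the matrices `A i` are i.i.d.,
the vector of real/imaginary parts of the entries has a rotation-invariant distribution,
all one-dimensional marginals are sub-Gaussian, and each coordinate has unit variance. -/
structure RotInvSubGaussian {Ω : Type} [MeasureSpace Ω] {n m : ℕ}
    (A : Fin m → Ω → Matrix (Fin n) (Fin n) ℂ) : Prop where
  prob : IsProbabilityMeasure (ℙ : Measure Ω)
  meas : ∀ i, Measurable fun ω => coeffVec (A i ω)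
  indep : iIndepFun (fun i ω => coeffVec (A i ω)) ℙ
  ident : ∀ i j, Measure.map (fun ω => coeffVec (A i ω)) ℙ
    = Measure.map (fun ω => coeffVec (A j ω)) ℙ
  rotInv : ∀ (i : Fin m) (O : Matrix (Fin n × Fin n × Fin 2) (Fin n × Fin n × Fin 2) ℝ),
    Oᵀ * O = 1 →
    Measure.map (fun ω => O.mulVec (coeffVec (A i ω))) ℙ
      = Measure.map (fun ω => coeffVec (A i ω)) ℙ
  subGaussian : ∀ (i : Fin m) (g : Fin n × Fin n × Fin 2 → ℝ),
    IsSubGaussianRV (fun ω => g ⬝ᵥ coeffVec (A i ω))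
  unitVar : ∀ (i : Fin m) (k : Fin n × Fin n × Fin 2), ∫ ω, (coeffVec (A i ω) k) ^ 2 = 1

/-- A matrix acting on `EuclideanSpace`. -/
def mApp {n : ℕ} (M : Matrix (Fin n) (Fin n) ℂ) (v : EuclideanSpace ℂ (Fin n)) :
    EuclideanSpace ℂ (Fin n) :=
  Matrix.toEuclideanLin M v

/-- `quadForm M u v = u* M v`. -/
def quadForm {n : ℕ} (M : Matrix (Fin n) (Fin n) ℂ) (u v : EuclideanSpace ℂ (Fin n)) : ℂ :=
  inner ℂ u (mApp M v)

/-- The spectral (operator) norm of a complex matrix. -/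
def specNorm {n : ℕ} (M : Matrix (Fin n) (Fin n) ℂ) : ℝ :=
  ‖LinearMap.toContinuousLinearMap (Matrix.toEuclideanLin M)‖

/-- The outer product `q p*`. -/
def outer {n : ℕ} (q p : EuclideanSpace ℂ (Fin n)) : Matrix (Fin n) (Fin n) ℂ :=
  Matrix.vecMulVec (fun r => q r) (fun c => starRingEnd ℂ (p c))

/-- `(1/m) Σᵢ (p* Aᵢ* q) Aᵢ − 2 q p*`. -/
def Gmat {n m : ℕ} (A : Fin m → Matrix (Fin n) (Fin n) ℂ)
    (p q : EuclideanSpace ℂ (Fin n)) : Matrix (Fin n) (Fin n) ℂ :=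
  (m : ℂ)⁻¹ • (∑ i, quadForm (A i)ᴴ p q • A i) - (2 : ℂ) • outer q p

/-- Squared distance up to a global phase. -/
def distSq {n : ℕ} (z x : EuclideanSpace ℂ (Fin n)) : ℝ :=
  ‖z‖ ^ 2 + ‖x‖ ^ 2 - 2 * ‖(inner ℂ z x : ℂ)‖

/-- The Wirtinger flow gradient of the loss `f(z) = (1/m) Σᵢ |z* Aᵢ z − x* Aᵢ x|²`. -/
def wfGrad {n m : ℕ} (A : Fin m → Matrix (Fin n) (Fin n) ℂ)
    (x z : EuclideanSpace ℂ (Fin n)) : EuclideanSpace ℂ (Fin n) :=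
  (m : ℂ)⁻¹ • ∑ i,
    ((quadForm (A i)ᴴ z z - quadForm (A i)ᴴ x x) • mApp (A i) z
      + (quadForm (A i) z z - quadForm (A i) x x) • mApp (A i)ᴴ z)

/-- The spectral initialization matrix `S = (1/m) Σᵢ ȳᵢ Aᵢ` with `yᵢ = x* Aᵢ x`. -/
def Smat {n m : ℕ} (A : Fin m → Matrix (Fin n) (Fin n) ℂ)
    (x : EuclideanSpace ℂ (Fin n)) : Matrix (Fin n) (Fin n) ℂ :=
  (m : ℂ)⁻¹ • ∑ i, starRingEnd ℂ (quadForm (A i) x x) • A i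

/-- `v` is a unit right singular vector of `S` associated with the largest singular value
(which equals the spectral norm). -/
def TopRightSingVec {n : ℕ} (S : Matrix (Fin n) (Fin n) ℂ)
    (v : EuclideanSpace ℂ (Fin n)) : Prop :=
  ‖v‖ = 1 ∧ ∃ u : EuclideanSpace ℂ (Fin n), ‖u‖ = 1 ∧
    mApp S v = (specNorm S : ℂ) • u ∧ mApp Sᴴ u = (specNorm S : ℂ) • v

end

section Aux
variable {n : ℕ}

lemma mApp_apply (M : Matrix (Fin n) (Fin n) ℂ) (v : EuclideanSpace ℂ (Fin n)) (i : Fin n) :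
    mApp M v i = ∑ j, M i j * v j := rfl

lemma quadForm_eq (M : Matrix (Fin n) (Fin n) ℂ) (u v : EuclideanSpace ℂ (Fin n)) :
    quadForm M u v = ∑ i, ∑ j, (starRingEnd ℂ) (u i) * (M i j * v j) := by
  simp [quadForm, PiLp.inner_apply, mApp_apply, Finset.mul_sum]
  exact Finset.sum_congr rfl fun i _ => by
    rw [Finset.sum_mul]; exact Finset.sum_congr rfl fun j _ => by ring

lemma quadForm_conjT (M : Matrix (Fin n) (Fin n) ℂ) (u v : EuclideanSpace ℂ (Fin n)) :
    quadForm Mᴴ u v = (starRingEnd ℂ) (quadForm M v u) := by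
  rw [quadForm_eq, quadForm_eq, map_sum, Finset.sum_comm]
  congr 1; ext i; rw [map_sum]; congr 1; ext j
  simp only [Matrix.conjTranspose_apply, _root_.map_mul, RingHomCompTriple.comp_apply,
    RingHom.id_apply, Matrix.star_apply]
  ring_nf
  simp [mul_comm, mul_left_comm]

lemma norm_quadForm_le (M : Matrix (Fin n) (Fin n) ℂ) (u v : EuclideanSpace ℂ (Fin n)) :
    ‖quadForm M u v‖ ≤ specNorm M * ‖u‖ * ‖v‖ := by
  have h1 : ‖quadForm M u v‖ ≤ ‖u‖ * ‖mApp M v‖ := norm_inner_le_norm u _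
  have h2 : ‖mApp M v‖ ≤ specNorm M * ‖v‖ := by
    exact (LinearMap.toContinuousLinearMap (Matrix.toEuclideanLin M)).le_opNorm v
  calc ‖quadForm M u v‖ ≤ ‖u‖ * ‖mApp M v‖ := h1
    _ ≤ ‖u‖ * (specNorm M * ‖v‖) := mul_le_mul_of_nonneg_left h2 (norm_nonneg u)
    _ = specNorm M * ‖u‖ * ‖v‖ := by ring

lemma quadForm_outer (p q u v : EuclideanSpace ℂ (Fin n)) :
    quadForm (outer q p) u v = (inner ℂ u q : ℂ) * (inner ℂ p v : ℂ) := by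
  simp only [quadForm_eq, outer, Matrix.vecMulVec_apply, PiLp.inner_apply,
    RCLike.inner_apply]
  rw [Finset.sum_mul_sum]
  exact Finset.sum_congr rfl fun i _ => Finset.sum_congr rfl fun j _ => by ring

end Aux
section Aux2
variable {n m : ℕ}

lemma quadForm_add_left (M : Matrix (Fin n) (Fin n) ℂ) (u u' v : EuclideanSpace ℂ (Fin n)) :
    quadForm M (u + u') v = quadForm M u v + quadForm M u' v :=
  inner_add_left _ _ _

lemma quadForm_add_right (M : Matrix (Fin n) (Fin n) ℂ) (u v v' : EuclideanSpace ℂ (Fin n)) :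
    quadForm M u (v + v') = quadForm M u v + quadForm M u v' := by
  unfold quadForm mApp
  rw [map_add, inner_add_right]

lemma quadForm_smul_left (M : Matrix (Fin n) (Fin n) ℂ) (c : ℂ) (u v : EuclideanSpace ℂ (Fin n)) :
    quadForm M (c • u) v = (starRingEnd ℂ) c * quadForm M u v :=
  inner_smul_left _ _ _

lemma quadForm_smul_right (M : Matrix (Fin n) (Fin n) ℂ) (c : ℂ) (u v : EuclideanSpace ℂ (Fin n)) :
    quadForm M u (c • v) = c * quadForm M u v := by
  unfold quadForm mApp
  rw [_root_.map_smul, inner_smul_right]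

lemma quadForm_Gmat (A : Fin m → Matrix (Fin n) (Fin n) ℂ) (p q u v : EuclideanSpace ℂ (Fin n)) :
    quadForm (Gmat A p q) u v =
      (m : ℂ)⁻¹ * ∑ i, quadForm (A i)ᴴ p q * quadForm (A i) u v
        - 2 * ((inner ℂ u q : ℂ) * (inner ℂ p v : ℂ)) := by
  have hlin : ∀ (M N : Matrix (Fin n) (Fin n) ℂ), quadForm (M - N) u v = quadForm M u v - quadForm N u v := by
    intro M N
    unfold quadForm mApp
    rw [map_sub, LinearMap.sub_apply, inner_sub_right]
  have hsmul : ∀ (c : ℂ) (M : Matrix (Fin n) (Fin n) ℂ), quadForm (c • M) u v = c * quadForm M u v := by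
    intro c M
    unfold quadForm mApp
    rw [_root_.map_smul, LinearMap.smul_apply, inner_smul_right]
  have hsum : ∀ (f : Fin m → Matrix (Fin n) (Fin n) ℂ), quadForm (∑ i, f i) u v = ∑ i, quadForm (f i) u v := by
    intro f
    unfold quadForm mApp
    rw [map_sum, LinearMap.sum_apply, inner_sum]
  unfold Gmat
  rw [hlin, hsmul, hsum, hsmul, quadForm_outer]
  simp only [hsmul]

lemma quadForm_Gmat_smul (A : Fin m → Matrix (Fin n) (Fin n) ℂ) (c d : ℂ)
    (p q u v : EuclideanSpace ℂ (Fin n)) :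
    quadForm (Gmat A (c • p) (d • q)) u v
      = (starRingEnd ℂ) c * d * quadForm (Gmat A p q) u v := by
  rw [quadForm_Gmat, quadForm_Gmat]
  simp only [quadForm_smul_left, quadForm_smul_right, inner_smul_left, inner_smul_right,
    mul_assoc, ← Finset.mul_sum]
  ring

lemma gmat_qf_bound {ν : ℝ} (hν : 0 < ν) (A : Fin m → Matrix (Fin n) (Fin n) ℂ)
    (hA : ∀ p q : EuclideanSpace ℂ (Fin n), ‖p‖ = 1 → ‖q‖ = 1 → specNorm (Gmat A p q) < ν)
    (p q u v : EuclideanSpace ℂ (Fin n)) :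
    ‖quadForm (Gmat A p q) u v‖ ≤ ν * (‖p‖ * ‖q‖ * (‖u‖ * ‖v‖)) := by
  by_cases hp : p = 0
  · have h0 : quadForm (Gmat A p q) u v = 0 := by
      have := quadForm_Gmat_smul A 0 1 p q u v
      simpa [hp] using this
    rw [h0, norm_zero]
    positivity
  by_cases hq : q = 0
  · have h0 : quadForm (Gmat A p q) u v = 0 := by
      have := quadForm_Gmat_smul A 1 0 p q u v
      simpa [hq] using this
    rw [h0, norm_zero]
    positivity
  · have hpn : (0:ℝ) < ‖p‖ := norm_pos_iff.mpr hp
    have hqn : (0:ℝ) < ‖q‖ := norm_pos_iff.mpr hq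
    set p₀ : EuclideanSpace ℂ (Fin n) := ((‖p‖⁻¹ : ℝ) : ℂ) • p with hp₀
    set q₀ : EuclideanSpace ℂ (Fin n) := ((‖q‖⁻¹ : ℝ) : ℂ) • q with hq₀
    have hp₀n : ‖p₀‖ = 1 := by
      rw [hp₀, norm_smul]
      simp [_root_.abs_of_nonneg (le_of_lt (inv_pos.mpr hpn)), inv_mul_cancel₀ (ne_of_gt hpn)]
    have hq₀n : ‖q₀‖ = 1 := by
      rw [hq₀, norm_smul]
      simp [_root_.abs_of_nonneg (le_of_lt (inv_pos.mpr hqn)), inv_mul_cancel₀ (ne_of_gt hqn)]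
    have hps : ((‖p‖ : ℝ) : ℂ) • p₀ = p := by
      rw [hp₀, smul_smul, ← Complex.ofReal_mul, mul_inv_cancel₀ (ne_of_gt hpn)]
      simp
    have hqs : ((‖q‖ : ℝ) : ℂ) • q₀ = q := by
      rw [hq₀, smul_smul, ← Complex.ofReal_mul, mul_inv_cancel₀ (ne_of_gt hqn)]
      simp
    have key : quadForm (Gmat A p q) u v
        = ((‖p‖ : ℝ) : ℂ) * ((‖q‖ : ℝ) : ℂ) * quadForm (Gmat A p₀ q₀) u v := by
      conv_lhs => rw [← hps, ← hqs]
      rw [quadForm_Gmat_smul]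
      simp [Complex.conj_ofReal]
    rw [key]
    have hbound : ‖quadForm (Gmat A p₀ q₀) u v‖ ≤ ν * (‖u‖ * ‖v‖) := by
      calc ‖quadForm (Gmat A p₀ q₀) u v‖ ≤ specNorm (Gmat A p₀ q₀) * ‖u‖ * ‖v‖ :=
            norm_quadForm_le _ _ _
        _ ≤ ν * (‖u‖ * ‖v‖) := by
            have := hA p₀ q₀ hp₀n hq₀n
            have hnn : (0:ℝ) ≤ ‖u‖ * ‖v‖ := by positivity
            nlinarith [norm_nonneg u, norm_nonneg v, mul_nonneg (norm_nonneg u) (norm_nonneg v)]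
    rw [norm_mul, norm_mul]
    simp only [Complex.norm_real, Real.norm_eq_abs, _root_.abs_of_nonneg (norm_nonneg p),
      _root_.abs_of_nonneg (norm_nonneg q)]
    calc ‖p‖ * ‖q‖ * ‖quadForm (Gmat A p₀ q₀) u v‖ ≤ ‖p‖ * ‖q‖ * (ν * (‖u‖ * ‖v‖)) := by
          apply mul_le_mul_of_nonneg_left hbound (by positivity)
      _ = ν * (‖p‖ * ‖q‖ * (‖u‖ * ‖v‖)) := by ring
end Aux2
/-- auxiliary: the averaged correlation sum. -/
noncomputable def Favg {n m : ℕ} (A : Fin m → Matrix (Fin n) (Fin n) ℂ)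
    (a b u v : EuclideanSpace ℂ (Fin n)) : ℂ :=
  (m:ℂ)⁻¹ * ∑ i, (starRingEnd ℂ) (quadForm (A i) a b) * quadForm (A i) u v

lemma Favg_sub_eq {n m : ℕ} (A : Fin m → Matrix (Fin n) (Fin n) ℂ)
    (a b u v : EuclideanSpace ℂ (Fin n)) :
    Favg A a b u v - 2 * ((inner ℂ u a : ℂ) * (inner ℂ b v : ℂ))
      = quadForm (Gmat A b a) u v := by
  rw [quadForm_Gmat, Favg]
  congr 2
  exact Finset.sum_congr rfl fun i _ => by rw [quadForm_conjT]

lemma Favg_re_ge {n m : ℕ} {ν : ℝ} (hν : 0 < ν) (A : Fin m → Matrix (Fin n) (Fin n) ℂ)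
    (hA : ∀ p q : EuclideanSpace ℂ (Fin n), ‖p‖ = 1 → ‖q‖ = 1 → specNorm (Gmat A p q) < ν)
    (a b u v : EuclideanSpace ℂ (Fin n)) :
    (Favg A a b u v).re ≥ (2 * ((inner ℂ u a : ℂ) * (inner ℂ b v : ℂ))).re
      - ν * (‖b‖ * ‖a‖ * (‖u‖ * ‖v‖)) := by
  have hb := gmat_qf_bound hν A hA b a u v
  have heq := Favg_sub_eq A a b u v
  have habs : |(Favg A a b u v - 2 * ((inner ℂ u a : ℂ) * (inner ℂ b v : ℂ))).re|
      ≤ ν * (‖b‖ * ‖a‖ * (‖u‖ * ‖v‖)) := by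
    calc |(Favg A a b u v - 2 * ((inner ℂ u a : ℂ) * (inner ℂ b v : ℂ))).re|
        ≤ ‖Favg A a b u v - 2 * ((inner ℂ u a : ℂ) * (inner ℂ b v : ℂ))‖ := by
          exact Complex.abs_re_le_norm _
      _ ≤ ν * (‖b‖ * ‖a‖ * (‖u‖ * ‖v‖)) := by rw [heq]; exact hb
  have h2 := (abs_le.mp habs).1
  rw [Complex.sub_re] at h2
  linarith

lemma aux_arith (a b c ν ρ : ℝ) (hν : 0 < ν) (hρ : 0 < ρ) (hb : 0 ≤ b) (hc : 0 ≤ c)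
    (hbc : b ≤ ρ * c) (ha1 : -(b*c) ≤ a) (ha2 : a ≤ b*c) :
    4*(b^2*c^2) + 4*a^2 + 12*(a*b^2) + 4*(b^2*b^2)
      - ν*(4*(b^2*c^2) + 6*(b^3*c) + 2*(b^2*b^2))
      ≥ 4*(1 - ρ - ν/2*(2+3*ρ+ρ^2))*b^2*c^2 := by
  have key : a^2 + 3*a*b^2 + b^4 + b^3*c ≥ 0 := by
    rcases eq_or_lt_of_le hb with hb0 | hbpos
    · rw [← hb0]; ring_nf; positivity
    by_cases hcase : 0 ≤ a + 3*b^2 - b*c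
    · nlinarith [mul_nonneg (show 0 ≤ a + b*c by linarith) hcase, sq_nonneg (b*(b-c))]
    · have h2c : 3*b < 2*c := by nlinarith
      nlinarith [sq_nonneg (2*a + 3*b^2),
        mul_nonneg (mul_nonneg (mul_nonneg hb hb) hb) (by linarith : (0:ℝ) ≤ 2*c - 3*b)]
  have h1 : b^3*c ≤ ρ*b^2*c^2 := by
    nlinarith [mul_le_mul_of_nonneg_left hbc (mul_nonneg (mul_nonneg hb hb) hc)]
  have h2 : b^4 ≤ ρ^2*b^2*c^2 := by
    have hbb : b*b ≤ (ρ*c)*(ρ*c) := mul_le_mul hbc hbc hb (by positivity)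
    nlinarith [mul_le_mul_of_nonneg_left hbb (mul_nonneg hb hb)]
  nlinarith [key, h1, h2, hν.le]

set_option maxHeartbeats 1000000 in
/-- Lower bound `Re⟨h, ∇f(z)⟩ ≥ c₁(ν, ρ) ‖h‖² ‖x‖²` for `z = x + h`, `‖h‖ ≤ ρ ‖x‖`,
`h* x` real, under the uniform spectral-norm concentration hypothesis, where
`c₁(ν, ρ) = 4 (1 − ρ − (ν/2)(2 + 3ρ + ρ²))`. -/
theorem grad_inner_lower_bound {n m : ℕ} (ν ρ : ℝ) (hν : 0 < ν) (hρ : 0 < ρ)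
    (A : Fin m → Matrix (Fin n) (Fin n) ℂ)
    (hA : ∀ p q : EuclideanSpace ℂ (Fin n), ‖p‖ = 1 → ‖q‖ = 1 →
      specNorm (Gmat A p q) < ν)
    (h x : EuclideanSpace ℂ (Fin n)) (hreal : (inner ℂ h x : ℂ).im = 0)
    (hhx : ‖h‖ ≤ ρ * ‖x‖) :
    (inner ℂ h (wfGrad A x (x + h)) : ℂ).re
      ≥ 4 * (1 - ρ - ν / 2 * (2 + 3 * ρ + ρ ^ 2)) * ‖h‖ ^ 2 * ‖x‖ ^ 2 := by
  set z : EuclideanSpace ℂ (Fin n) := x + h with hz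
  -- Step 1: complex identity for the inner product
  have step1 : (inner ℂ h (wfGrad A x z) : ℂ)
      = (m:ℂ)⁻¹ * ∑ i,
          ((starRingEnd ℂ) (quadForm (A i) z z - quadForm (A i) x x) * quadForm (A i) h z
            + (quadForm (A i) z z - quadForm (A i) x x)
              * (starRingEnd ℂ) (quadForm (A i) z h)) := by
    unfold wfGrad
    rw [inner_smul_right, inner_sum]
    congr 1
    refine Finset.sum_congr rfl fun i _ => ?_
    rw [inner_add_right, inner_smul_right, inner_smul_right]
    have e1 : (inner ℂ h (mApp (A i) z) : ℂ) = quadForm (A i) h z := rfl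
    have e2 : (inner ℂ h (mApp (A i)ᴴ z) : ℂ) = (starRingEnd ℂ) (quadForm (A i) z h) :=
      quadForm_conjT _ _ _
    rw [e1, e2, quadForm_conjT (A i) z z, quadForm_conjT (A i) x x, ← map_sub]
  -- Step 2: real part identity
  have step2 : (inner ℂ h (wfGrad A x z) : ℂ).re
      = ((m:ℂ)⁻¹ * ∑ i,
          (starRingEnd ℂ) (quadForm (A i) z z - quadForm (A i) x x)
            * (quadForm (A i) h z + quadForm (A i) z h)).re := by
    rw [step1]
    have hm : (m:ℂ)⁻¹ = (((m:ℝ)⁻¹ : ℝ) : ℂ) := by push_cast; ring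
    rw [hm, Complex.re_ofReal_mul, Complex.re_ofReal_mul, Complex.re_sum, Complex.re_sum]
    congr 1
    refine Finset.sum_congr rfl fun i _ => ?_
    simp only [Complex.add_re, Complex.mul_re, Complex.conj_re, Complex.conj_im,
      Complex.add_im]
    ring
  -- Step 3: expand bilinearly into nine sums
  have hexp : ∀ i : Fin m,
      (starRingEnd ℂ) (quadForm (A i) z z - quadForm (A i) x x)
        * (quadForm (A i) h z + quadForm (A i) z h)
      = (starRingEnd ℂ) (quadForm (A i) h x) * quadForm (A i) h x
        + (starRingEnd ℂ) (quadForm (A i) h x) * quadForm (A i) x h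
        + (starRingEnd ℂ) (quadForm (A i) x h) * quadForm (A i) h x
        + (starRingEnd ℂ) (quadForm (A i) x h) * quadForm (A i) x h
        + 2 * ((starRingEnd ℂ) (quadForm (A i) h x) * quadForm (A i) h h)
        + 2 * ((starRingEnd ℂ) (quadForm (A i) x h) * quadForm (A i) h h)
        + (starRingEnd ℂ) (quadForm (A i) h h) * quadForm (A i) h x
        + (starRingEnd ℂ) (quadForm (A i) h h) * quadForm (A i) x h
        + 2 * ((starRingEnd ℂ) (quadForm (A i) h h) * quadForm (A i) h h) := by
    intro i
    rw [hz]
    simp only [quadForm_add_left, quadForm_add_right, map_add, map_sub]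
    ring
  have step3 : (inner ℂ h (wfGrad A x z) : ℂ).re
      = (Favg A h x h x + Favg A h x x h + Favg A x h h x + Favg A x h x h
          + 2 * Favg A h x h h + 2 * Favg A x h h h + Favg A h h h x + Favg A h h x h
          + 2 * Favg A h h h h).re := by
    rw [step2]
    congr 1
    rw [Finset.sum_congr rfl fun i _ => hexp i]
    simp only [Favg, Finset.sum_add_distrib, ← Finset.mul_sum]
    ring

  -- inner product values
  set a : ℝ := (inner ℂ h x : ℂ).re with ha
  have hhx' : (inner ℂ h x : ℂ) = ((a : ℝ) : ℂ) := by
    apply Complex.ext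
    · simp [ha]
    · rw [Complex.ofReal_im]; exact hreal
  have hxh : (inner ℂ x h : ℂ) = ((a : ℝ) : ℂ) := by
    rw [← inner_conj_symm, hhx', Complex.conj_ofReal]
  have hhh : (inner ℂ h h : ℂ) = ((‖h‖ : ℝ) : ℂ) ^ 2 := inner_self_eq_norm_sq_to_K h
  have hxx : (inner ℂ x x : ℂ) = ((‖x‖ : ℝ) : ℂ) ^ 2 := inner_self_eq_norm_sq_to_K x
  set b : ℝ := ‖h‖ with hbdef
  set c : ℝ := ‖x‖ with hcdef
  have hbnn : 0 ≤ b := norm_nonneg h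
  have hcnn : 0 ≤ c := norm_nonneg x
  have hab : |a| ≤ b * c := by
    calc |a| ≤ ‖(inner ℂ h x : ℂ)‖ := Complex.abs_re_le_norm _
      _ = ‖(inner ℂ h x : ℂ)‖ := rfl
      _ ≤ b * c := norm_inner_le_norm h x
  have e1 : (Favg A h x h x).re ≥ 2*(b^2*c^2) - ν*(c*b*(b*c)) := by
    have hk := Favg_re_ge hν A hA h x h x
    rw [hhh, hxx] at hk
    rwa [show (2 : ℂ) * (((b:ℝ):ℂ)^2 * ((c:ℝ):ℂ)^2) = ((2*(b^2*c^2) : ℝ) : ℂ) by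
      push_cast; ring, Complex.ofReal_re] at hk
  have e2 : (Favg A h x x h).re ≥ 2*(a^2) - ν*(c*b*(c*b)) := by
    have hk := Favg_re_ge hν A hA h x x h
    rw [hxh] at hk
    rwa [show (2 : ℂ) * (((a:ℝ):ℂ) * ((a:ℝ):ℂ)) = ((2*(a^2) : ℝ) : ℂ) by
      push_cast; ring, Complex.ofReal_re] at hk
  have e3 : (Favg A x h h x).re ≥ 2*(a^2) - ν*(b*c*(b*c)) := by
    have hk := Favg_re_ge hν A hA x h h x
    rw [hhx'] at hk
    rwa [show (2 : ℂ) * (((a:ℝ):ℂ) * ((a:ℝ):ℂ)) = ((2*(a^2) : ℝ) : ℂ) by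
      push_cast; ring, Complex.ofReal_re] at hk
  have e4 : (Favg A x h x h).re ≥ 2*(b^2*c^2) - ν*(b*c*(c*b)) := by
    have hk := Favg_re_ge hν A hA x h x h
    rw [hhh, hxx] at hk
    rwa [show (2 : ℂ) * (((c:ℝ):ℂ)^2 * ((b:ℝ):ℂ)^2) = ((2*(b^2*c^2) : ℝ) : ℂ) by
      push_cast; ring, Complex.ofReal_re] at hk
  have e5 : (Favg A h x h h).re ≥ 2*(a*b^2) - ν*(c*b*(b*b)) := by
    have hk := Favg_re_ge hν A hA h x h h
    rw [hhh, hxh] at hk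
    rwa [show (2 : ℂ) * (((b:ℝ):ℂ)^2 * ((a:ℝ):ℂ)) = ((2*(a*b^2) : ℝ) : ℂ) by
      push_cast; ring, Complex.ofReal_re] at hk
  have e6 : (Favg A x h h h).re ≥ 2*(a*b^2) - ν*(b*c*(b*b)) := by
    have hk := Favg_re_ge hν A hA x h h h
    rw [hhh, hhx'] at hk
    rwa [show (2 : ℂ) * (((a:ℝ):ℂ) * ((b:ℝ):ℂ)^2) = ((2*(a*b^2) : ℝ) : ℂ) by
      push_cast; ring, Complex.ofReal_re] at hk
  have e7 : (Favg A h h h x).re ≥ 2*(a*b^2) - ν*(b*b*(b*c)) := by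
    have hk := Favg_re_ge hν A hA h h h x
    rw [hhh, hhx'] at hk
    rwa [show (2 : ℂ) * (((b:ℝ):ℂ)^2 * ((a:ℝ):ℂ)) = ((2*(a*b^2) : ℝ) : ℂ) by
      push_cast; ring, Complex.ofReal_re] at hk
  have e8 : (Favg A h h x h).re ≥ 2*(a*b^2) - ν*(b*b*(c*b)) := by
    have hk := Favg_re_ge hν A hA h h x h
    rw [hhh, hxh] at hk
    rwa [show (2 : ℂ) * (((a:ℝ):ℂ) * ((b:ℝ):ℂ)^2) = ((2*(a*b^2) : ℝ) : ℂ) by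
      push_cast; ring, Complex.ofReal_re] at hk
  have e9 : (Favg A h h h h).re ≥ 2*(b^2*b^2) - ν*(b*b*(b*b)) := by
    have hk := Favg_re_ge hν A hA h h h h
    rw [hhh] at hk
    rwa [show (2 : ℂ) * (((b:ℝ):ℂ)^2 * ((b:ℝ):ℂ)^2) = ((2*(b^2*b^2) : ℝ) : ℂ) by
      push_cast; ring, Complex.ofReal_re] at hk
  have retotal : (Favg A h x h x + Favg A h x x h + Favg A x h h x + Favg A x h x h
          + 2 * Favg A h x h h + 2 * Favg A x h h h + Favg A h h h x + Favg A h h x h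
          + 2 * Favg A h h h h).re
      = (Favg A h x h x).re + (Favg A h x x h).re + (Favg A x h h x).re
        + (Favg A x h x h).re + 2 * (Favg A h x h h).re + 2 * (Favg A x h h h).re
        + (Favg A h h h x).re + (Favg A h h x h).re + 2 * (Favg A h h h h).re := by
    simp [Complex.add_re, Complex.mul_re]
  rw [step3, retotal]
  have ha1 : -(b*c) ≤ a := by have := abs_le.mp hab; linarith [this.1]
  have ha2 : a ≤ b*c := (abs_le.mp hab).2
  have arith := aux_arith a b c ν ρ hν hρ hbnn hcnn hhx ha1 ha2
  ring_nf at e1 e2 e3 e4 e5 e6 e7 e8 e9 arith ⊢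
  linarith [e1, e2, e3, e4, e5, e6, e7, e8, e9, arith]
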